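/- Let ρ be a density operator on a tensor product ⨂_{k=1}^m H_k with dim H_k = d^{|X_k|}, let ρ_k be its marginal on H_k, and suppose the multi-region correlation bound |Tr(ρ (A₁⊗⋯⊗A_m)) − ∏_k Tr(ρ_k A_k)| ≤ f(R) N ∏_k ‖A_k‖ holds for all observables A_k on H_k, where N = Σ_k |X_k|. Then ‖ρ − ⨂_k ρ_k‖₁ ≤ N f(R) d^{2N}. -/

import Mathlib

open Matrix
open scoped ComplexOrder

/-- The trace norm `‖A‖₁ = Tr √(A†A)`. -/
noncomputable def traceNorm {n : Type*} [Fintype n] [DecidableEq n]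
    (A : Matrix n n ℂ) : ℝ :=
  (((Matrix.posSemidef_conjTranspose_mul_self A).1.eigenvectorUnitary.1 *
      Matrix.diagonal (((↑) : ℝ → ℂ) ∘ (√·) ∘ (Matrix.posSemidef_conjTranspose_mul_self A).1.eigenvalues) *
      (star (Matrix.posSemidef_conjTranspose_mul_self A).1.eigenvectorUnitary : Matrix n n ℂ)).trace).re

/-- The operator (spectral) norm of a matrix. -/
noncomputable def opNorm {n : Type*} [Fintype n] [DecidableEq n]
    (A : Matrix n n ℂ) : ℝ :=
  ‖Matrix.toEuclideanCLM (𝕜 := ℂ) A‖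

/-- The tensor (Kronecker) product of a family of matrices. -/
noncomputable def kronPi {m : ℕ} {n : Fin m → ℕ}
    (A : (k : Fin m) → Matrix (Fin (n k)) (Fin (n k)) ℂ) :
    Matrix ((k : Fin m) → Fin (n k)) ((k : Fin m) → Fin (n k)) ℂ :=
  Matrix.of fun v w => ∏ k, A k (v k) (w k)

/-- Theorem of Appendix C: let `ρ` be a density operator on `⨂_k H_k` with
`dim H_k = d^{|X_k|}`, with marginals `ρ_k`, satisfying the multi-region
correlation bound `|Tr(ρ (A₁ ⊗ ⋯ ⊗ A_m)) − ∏_k Tr(ρ_k A_k)| ≤ f(R) N ∏_k ‖A_k‖`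
(`N = Σ_k |X_k|`).  Then `‖ρ − ⨂_k ρ_k‖₁ ≤ N f(R) d^{2N}`. -/
lemma unitary_row_sq {n : Type*} [Fintype n] [DecidableEq n] {U : Matrix n n ℂ}
    (hU : U ∈ Matrix.unitaryGroup n ℂ) (v : n) :
    ∑ i, ‖U v i‖ ^ 2 = 1 := by
  have h := congrFun (congrFun (congrArg (fun M : Matrix n n ℂ => (M : Matrix n n ℂ))
    (Matrix.mem_unitaryGroup_iff.mp hU)) v) v
  simp only [Matrix.mul_apply, Matrix.star_apply, Matrix.star_eq_conjTranspose,
    Matrix.conjTranspose_apply, Matrix.one_apply_eq] at h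
  have h2 : ∑ i, U v i * (starRingEnd ℂ) (U v i) = 1 := by
    simpa [Matrix.mul_apply, Matrix.conjTranspose_apply] using h
  have h3 := congrArg Complex.re h2
  simp only [Complex.re_sum, Complex.mul_conj, Complex.one_re] at h3
  rw [← h3]
  refine Finset.sum_congr rfl fun i _ => ?_
  rw [Complex.sq_norm]
  simp


lemma conj_mul_conj {n : Type*} [Fintype n] [DecidableEq n] (U A B : Matrix n n ℂ)
    (h : star U * U = 1) :
    (U * A * star U) * (U * B * star U) = U * (A * B) * star U := by
  calc (U * A * star U) * (U * B * star U)
      = U * (A * ((star U * U) * (B * star U))) := by simp only [Matrix.mul_assoc]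
    _ = U * (A * B) * star U := by rw [h, Matrix.one_mul]; simp only [Matrix.mul_assoc]

lemma traceNorm_le_sum_abs {n : Type*} [Fintype n] [DecidableEq n]
    {P : Matrix n n ℂ} (hP : P.IsHermitian) :
    traceNorm P ≤ ∑ v, ∑ w, ‖P v w‖ := by
  classical
  set U : Matrix n n ℂ := (hP.eigenvectorUnitary : Matrix n n ℂ) with hUdef
  set lam : n → ℝ := hP.eigenvalues with hlamdef
  have hUmem : U ∈ Matrix.unitaryGroup n ℂ := hP.eigenvectorUnitary.2
  have hU1' : star U * U = 1 := Matrix.mem_unitaryGroup_iff'.mp hUmem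
  set D1 : Matrix n n ℂ := Matrix.diagonal (RCLike.ofReal ∘ lam) with hD1def
  set Dabs : Matrix n n ℂ := Matrix.diagonal (fun i => (Complex.ofReal |lam i|)) with hDadef
  set S : Matrix n n ℂ := U * Dabs * star U with hSdef
  have hDpsd : Dabs.PosSemidef := by
    refine Matrix.posSemidef_diagonal_iff.mpr fun i => ?_
    rw [Complex.le_def]
    simp [abs_nonneg]
  have hSpsd : S.PosSemidef := by
    have := hDpsd.mul_mul_conjTranspose_same U
    simpa [hSdef, Matrix.star_eq_conjTranspose] using this
  have hspec : P = U * D1 * star U := by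
    have := hP.spectral_theorem
    rwa [Unitary.conjStarAlgAut_apply] at this
  have hDD : Dabs * Dabs = D1 * D1 := by
    rw [hDadef, hD1def, Matrix.diagonal_mul_diagonal, Matrix.diagonal_mul_diagonal]
    refine congrArg Matrix.diagonal (funext fun i => ?_)
    show (Complex.ofReal (|lam i|) * Complex.ofReal (|lam i|) : ℂ)
        = Complex.ofReal (lam i) * Complex.ofReal (lam i)
    rw [← Complex.ofReal_mul, ← Complex.ofReal_mul]
    exact congrArg _ (abs_mul_abs_self _)
  have hsq : S ^ 2 = Pᴴ * P := by
    rw [hP.eq, pow_two, hSdef, conj_mul_conj U Dabs Dabs hU1', hDD,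
      ← conj_mul_conj U D1 D1 hU1', ← hspec]
  have hsqrt : ((Matrix.posSemidef_conjTranspose_mul_self P).1.eigenvectorUnitary.1 *
      Matrix.diagonal (((↑) : ℝ → ℂ) ∘ (√·) ∘ (Matrix.posSemidef_conjTranspose_mul_self P).1.eigenvalues) *
      (star (Matrix.posSemidef_conjTranspose_mul_self P).1.eigenvectorUnitary : Matrix n n ℂ)) = S := by
    have e1 : cfc Real.sqrt (Pᴴ * P) = ((Matrix.posSemidef_conjTranspose_mul_self P).1.eigenvectorUnitary.1 *
        Matrix.diagonal (((↑) : ℝ → ℂ) ∘ (√·) ∘ (Matrix.posSemidef_conjTranspose_mul_self P).1.eigenvalues) *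
        (star (Matrix.posSemidef_conjTranspose_mul_self P).1.eigenvectorUnitary : Matrix n n ℂ)) := by
      rw [(Matrix.posSemidef_conjTranspose_mul_self P).1.cfc_eq, Matrix.IsHermitian.cfc,
        Unitary.conjStarAlgAut_apply]
      rfl
    have e2 : cfc (fun x : ℝ => |x|) P = S := by
      rw [hP.cfc_eq, Matrix.IsHermitian.cfc, Unitary.conjStarAlgAut_apply]
      rfl
    have e3 : Pᴴ * P = P ^ 2 := by rw [hP.eq, sq]
    rw [← e1, ← e2, e3, ← cfc_comp_pow Real.sqrt 2 P Real.continuous_sqrt.continuousOn hP.isSelfAdjoint]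
    exact cfc_congr (fun x _ => Real.sqrt_sq_eq_abs x)
  have htr : traceNorm P = ∑ i, |lam i| := by
    rw [show traceNorm P = (S.trace).re from congrArg (fun M => (Matrix.trace M).re) hsqrt, hSdef, Matrix.trace_mul_comm, ← Matrix.mul_assoc, hU1',
      Matrix.one_mul, hDadef, Matrix.trace_diagonal]
    rw [Complex.re_sum]
    norm_num
  rw [htr]
  have hdiag : D1 = star U * P * U := by
    rw [hspec, ← Matrix.mul_assoc, ← Matrix.mul_assoc, hU1', Matrix.one_mul, Matrix.mul_assoc, hU1',
      Matrix.mul_one]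
  have hlam : ∀ i, (lam i : ℂ) = ∑ w, ∑ v, (starRingEnd ℂ) (U v i) * P v w * U w i := by
    intro i
    have h0 := congrFun (congrFun (congrArg (fun M : Matrix n n ℂ => M) hdiag) i) i
    simp only [hD1def, Matrix.diagonal_apply_eq, Function.comp_apply] at h0
    rw [show (RCLike.ofReal (lam i) : ℂ) = (lam i : ℂ) from rfl] at h0
    rw [h0]
    simp only [Matrix.mul_apply, Finset.sum_mul]
    refine Finset.sum_congr rfl fun w _ => Finset.sum_congr rfl fun v _ => ?_
    simp only [Matrix.star_eq_conjTranspose, Matrix.conjTranspose_apply, Complex.star_def]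
  have hCS : ∀ v w : n, ∑ i, ‖U v i‖ * ‖U w i‖ ≤ 1 := by
    intro v w
    have h1 := unitary_row_sq hUmem v
    have h2 := unitary_row_sq hUmem w
    have hcs := Finset.sum_mul_sq_le_sq_mul_sq Finset.univ
      (fun i => ‖U v i‖) (fun i => ‖U w i‖)
    rw [h1, h2, mul_one] at hcs
    refine (pow_le_one_iff_of_nonneg ?_ two_ne_zero).mp hcs
    exact Finset.sum_nonneg fun i _ => mul_nonneg (norm_nonneg _) (norm_nonneg _)
  calc ∑ i, |lam i|
      ≤ ∑ i, ∑ w, ∑ v, ‖U v i‖ * ‖P v w‖ * ‖U w i‖ := by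
        refine Finset.sum_le_sum fun i _ => ?_
        have h1 : |lam i| = ‖(lam i : ℂ)‖ := by rw [Complex.norm_real, Real.norm_eq_abs]
        rw [h1, hlam i]
        refine le_trans (norm_sum_le _ _) (Finset.sum_le_sum fun w _ => ?_)
        refine le_trans (norm_sum_le _ _) (Finset.sum_le_sum fun v _ => ?_)
        simp only [norm_mul, Complex.norm_conj]
        exact le_refl _
    _ = ∑ w, ∑ v, ‖P v w‖ * ∑ i, ‖U v i‖ * ‖U w i‖ := by
        rw [Finset.sum_comm]
        refine Finset.sum_congr rfl fun w _ => ?_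
        rw [Finset.sum_comm]
        refine Finset.sum_congr rfl fun v _ => ?_
        rw [Finset.mul_sum]
        exact Finset.sum_congr rfl fun i _ => by ring
    _ ≤ ∑ w, ∑ v, ‖P v w‖ * 1 := by
        refine Finset.sum_le_sum fun w _ => Finset.sum_le_sum fun v _ => ?_
        exact mul_le_mul_of_nonneg_left (hCS v w) (norm_nonneg _)
    _ = ∑ v, ∑ w, ‖P v w‖ := by
        rw [Finset.sum_comm]
        simp

lemma kronPi_std_apply {m : ℕ} {n : Fin m → ℕ} (v₀ w₀ w v : (k : Fin m) → Fin (n k)) :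
    kronPi (fun k => Matrix.single (w₀ k) (v₀ k) (1 : ℂ)) w v
      = if w₀ = w ∧ v₀ = v then 1 else 0 := by
  rw [kronPi, Matrix.of_apply]
  by_cases h : w₀ = w ∧ v₀ = v
  · obtain ⟨h1, h2⟩ := h
    subst h1; subst h2
    simp [Matrix.single]
  · rw [if_neg h]
    rw [not_and_or] at h
    have : ∃ k, ¬ (w₀ k = w k ∧ v₀ k = v k) := by
      rcases h with h | h
      · obtain ⟨k, hk⟩ := Function.ne_iff.mp h
        exact ⟨k, fun hc => hk hc.1⟩
      · obtain ⟨k, hk⟩ := Function.ne_iff.mp h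
        exact ⟨k, fun hc => hk hc.2⟩
    obtain ⟨k, hk⟩ := this
    refine Finset.prod_eq_zero (Finset.mem_univ k) ?_
    simp [Matrix.single, hk]

lemma trace_mul_kron_std {m : ℕ} {n : Fin m → ℕ}
    (M : Matrix ((k : Fin m) → Fin (n k)) ((k : Fin m) → Fin (n k)) ℂ)
    (v₀ w₀ : (k : Fin m) → Fin (n k)) :
    (M * kronPi (fun k => Matrix.single (w₀ k) (v₀ k) (1 : ℂ))).trace = M v₀ w₀ := by
  rw [Matrix.trace]
  simp only [Matrix.diag_apply, Matrix.mul_apply, kronPi_std_apply]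
  simp [ite_and, Finset.sum_ite_eq]

lemma trace_mul_std {n : Type*} [Fintype n] [DecidableEq n] (B : Matrix n n ℂ) (i j : n) :
    (B * Matrix.single i j (1 : ℂ)).trace = B j i := by
  rw [Matrix.trace]
  simp only [Matrix.diag_apply, Matrix.mul_apply, Matrix.single, Matrix.of_apply]
  simp [ite_and, Finset.sum_ite_eq]

lemma kronPi_one {m : ℕ} {n : Fin m → ℕ} :
    kronPi (fun k => (1 : Matrix (Fin (n k)) (Fin (n k)) ℂ)) = 1 := by
  ext v w
  rw [kronPi, Matrix.of_apply]
  by_cases h : v = w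
  · subst h; simp
  · rw [Matrix.one_apply_ne h]
    obtain ⟨k, hk⟩ := Function.ne_iff.mp h
    exact Finset.prod_eq_zero (Finset.mem_univ k) (Matrix.one_apply_ne hk)

lemma opNorm_one {n : Type*} [Fintype n] [DecidableEq n] [Nonempty n] :
    opNorm (1 : Matrix n n ℂ) = 1 := by
  haveI : Nontrivial (EuclideanSpace ℂ n) := by
    obtain ⟨i⟩ := ‹Nonempty n›
    refine ⟨0, EuclideanSpace.single i 1, fun h => ?_⟩
    have := congrFun (congrArg (fun x : EuclideanSpace ℂ n => (x : n → ℂ)) h) i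
    simp [EuclideanSpace.single_apply] at this
  rw [opNorm, _root_.map_one]
  exact norm_one

lemma opNorm_std_le {n : Type*} [Fintype n] [DecidableEq n] (i j : n) :
    opNorm (Matrix.single i j (1 : ℂ)) ≤ 1 := by
  rw [opNorm]
  refine ContinuousLinearMap.opNorm_le_bound _ zero_le_one fun x => ?_
  rw [one_mul]
  have hx : (Matrix.toEuclideanCLM (𝕜 := ℂ) (Matrix.single i j (1:ℂ))) x
      = (WithLp.equiv 2 _).symm ((Matrix.single i j (1:ℂ)) *ᵥ (WithLp.equiv 2 _ x)) := by
    rfl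
  rw [hx]
  rw [EuclideanSpace.norm_eq, EuclideanSpace.norm_eq]
  refine Real.sqrt_le_sqrt ?_
  have hmv : ∀ a, ((Matrix.single i j (1:ℂ)) *ᵥ (WithLp.equiv 2 _ x)) a
      = if i = a then (WithLp.equiv 2 _ x) j else 0 := by
    intro a
    rw [Matrix.mulVec, dotProduct]
    simp only [Matrix.single, Matrix.of_apply, ite_mul, one_mul, zero_mul]
    simp [ite_and, Finset.sum_ite_eq]
  calc ∑ a, ‖(WithLp.equiv 2 _).symm ((Matrix.single i j (1:ℂ)) *ᵥ (WithLp.equiv 2 _ x)) a‖ ^ 2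
      = ∑ a, ‖if i = a then (WithLp.equiv 2 _ x) j else 0‖ ^ 2 := by
        refine Finset.sum_congr rfl fun a _ => ?_
        rw [show ((WithLp.equiv 2 _).symm ((Matrix.single i j (1:ℂ)) *ᵥ (WithLp.equiv 2 _ x)) : EuclideanSpace ℂ n) a = ((Matrix.single i j (1:ℂ)) *ᵥ (WithLp.equiv 2 _ x)) a from rfl, hmv a]
    _ = ‖x j‖ ^ 2 := by
        simp only [apply_ite norm, norm_zero, ite_pow]
        rw [show ((0:ℝ) ^ 2) = 0 by norm_num, Finset.sum_ite_eq]
        rw [if_pos (Finset.mem_univ i)]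
        rfl
    _ ≤ ∑ a, ‖x a‖ ^ 2 := by
        exact Finset.single_le_sum (f := fun a => ‖x a‖ ^ 2) (fun a _ => sq_nonneg _) (Finset.mem_univ j)


theorem factorization_from_correlation_bound
    {m d : ℕ} {c : Fin m → ℕ} (f : ℝ → ℝ) (R : ℝ)
    (ρ : Matrix ((k : Fin m) → Fin (d ^ c k)) ((k : Fin m) → Fin (d ^ c k)) ℂ)
    (ρk : (k : Fin m) → Matrix (Fin (d ^ c k)) (Fin (d ^ c k)) ℂ)
    (hρ : ρ.PosSemidef) (hρtr : ρ.trace = 1)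
    (hρk : ∀ k, (ρk k).PosSemidef ∧ (ρk k).trace = 1)
    (hmarg : ∀ (k : Fin m) (B : Matrix (Fin (d ^ c k)) (Fin (d ^ c k)) ℂ),
      (ρk k * B).trace =
        (ρ * kronPi (Function.update
          (fun l => (1 : Matrix (Fin (d ^ c l)) (Fin (d ^ c l)) ℂ)) k B)).trace)
    (hbound : ∀ A : (k : Fin m) → Matrix (Fin (d ^ c k)) (Fin (d ^ c k)) ℂ,
      ‖(ρ * kronPi A).trace - ∏ k, (ρk k * A k).trace‖
        ≤ f R * (∑ k, (c k : ℝ)) * ∏ k, opNorm (A k)) :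
    traceNorm (ρ - kronPi ρk)
      ≤ (∑ k, (c k : ℝ)) * f R * (d : ℝ) ^ (2 * ∑ k, c k) := by
  classical
  set N : ℝ := ∑ k, (c k : ℝ) with hN
  have hpos : ∀ k, 0 < d ^ c k := by
    intro k
    rcases Nat.eq_zero_or_pos (d ^ c k) with h | h
    · exfalso
      haveI : IsEmpty (Fin (d ^ c k)) := ⟨fun x => by have := x.2; omega⟩
      have h2 := (hρk k).2
      rw [Matrix.trace, Finset.univ_eq_empty, Finset.sum_empty] at h2
      exact one_ne_zero h2.symm
    · exact h
  haveI hne : ∀ k, Nonempty (Fin (d ^ c k)) := fun k => ⟨⟨0, hpos k⟩⟩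
  have hfN : 0 ≤ f R * N := by
    have h := hbound (fun k => 1)
    rw [kronPi_one] at h
    simp only [Matrix.mul_one] at h
    rw [hρtr, Finset.prod_eq_one (fun k _ => (hρk k).2), sub_self, norm_zero,
      Finset.prod_eq_one (fun (k : Fin m) _ => opNorm_one), mul_one] at h
    exact h
  have key : ∀ v w, ‖(ρ - kronPi ρk) v w‖ ≤ f R * N := by
    intro v w
    have h := hbound (fun k => Matrix.single (w k) (v k) 1)
    rw [trace_mul_kron_std ρ v w,
      Finset.prod_congr rfl (fun (k : Fin m) _ => trace_mul_std (ρk k) (w k) (v k))] at h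
    have hPvw : (ρ - kronPi ρk) v w = ρ v w - ∏ k, ρk k (v k) (w k) := by
      simp [Matrix.sub_apply, kronPi]
    rw [hPvw]
    refine h.trans ?_
    calc f R * N * ∏ k, opNorm (Matrix.single (w k) (v k) (1 : ℂ))
        ≤ f R * N * 1 := by
          refine mul_le_mul_of_nonneg_left ?_ hfN
          exact Finset.prod_le_one (fun k _ => norm_nonneg _) (fun k _ => opNorm_std_le _ _)
      _ = f R * N := mul_one _
  have hker : (kronPi ρk).IsHermitian := by
    rw [Matrix.IsHermitian]
    ext v w
    rw [Matrix.conjTranspose_apply]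
    show (starRingEnd ℂ) (∏ k, ρk k (w k) (v k)) = ∏ k, ρk k (v k) (w k)
    rw [map_prod]
    refine Finset.prod_congr rfl fun k _ => ?_
    calc (starRingEnd ℂ) (ρk k (w k) (v k)) = (ρk k)ᴴ (v k) (w k) := rfl
      _ = ρk k (v k) (w k) := by rw [(hρk k).1.1]
  have hmain := traceNorm_le_sum_abs (hρ.1.sub hker)
  refine hmain.trans ?_
  have hcard : (Fintype.card ((k : Fin m) → Fin (d ^ c k)) : ℝ)
      = (d : ℝ) ^ (∑ k, c k) := by
    rw [Fintype.card_pi]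
    simp only [Fintype.card_fin]
    rw [Finset.prod_pow_eq_pow_sum]
    push_cast
    ring
  calc ∑ v, ∑ w, ‖(ρ - kronPi ρk) v w‖
      ≤ ∑ _v : (k : Fin m) → Fin (d ^ c k), ∑ _w : (k : Fin m) → Fin (d ^ c k), (f R * N) :=
        Finset.sum_le_sum fun v _ => Finset.sum_le_sum fun w _ => key v w
    _ = (Fintype.card ((k : Fin m) → Fin (d ^ c k)) : ℝ)
        * ((Fintype.card ((k : Fin m) → Fin (d ^ c k)) : ℝ) * (f R * N)) := by
        rw [Finset.sum_const, Finset.sum_const]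
        simp only [Finset.card_univ, nsmul_eq_mul]
    _ = N * f R * (d : ℝ) ^ (2 * ∑ k, c k) := by
        rw [hcard, two_mul, pow_add]
        ring
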